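/- For integers n, k with 1 ≤ k ≤ n, the degenerate central factorial polynomials of the second kind satisfy the recurrence T_{2,λ}(n+1,k|x) = (x + k/2 - nλ)·T_{2,λ}(n,k|x) + T_{2,λ}(n,k-1|x - 1/2). -/

import Mathlib

noncomputable def T2 (lam x : ℝ) (n k : ℕ) : ℝ :=
  iteratedDeriv n (fun t : ℝ =>
    (k.factorial : ℝ)⁻¹ * (1 + lam * t) ^ (x / lam) *
      ((1 + lam * t) ^ (1 / (2 * lam)) - (1 + lam * t) ^ (-(1 / (2 * lam)))) ^ k) 0

open Real Set

private lemma my_idw_open {f : ℝ → ℝ} {s : Set ℝ} {x : ℝ} (n : ℕ) (hs : IsOpen s)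
    (hx : x ∈ s) : iteratedDerivWithin n f s x = iteratedDeriv n f x := by
  simp only [iteratedDerivWithin_eq_iteratedFDerivWithin, iteratedDeriv_eq_iteratedFDeriv,
    iteratedFDerivWithin_of_isOpen n hs hx]

private lemma my_mono {f : ℝ → ℝ} {U : Set ℝ} (h : ContDiffOn ℝ (⊤ : ℕ∞) f U) (n : ℕ) :
    ContDiffOn ℝ (n : WithTop ℕ∞) f U := h.of_le (by exact_mod_cast le_top)

private lemma my_leibniz (lam : ℝ) {U : Set ℝ} (hU : IsOpen U) :
    ∀ (n : ℕ) (ψ : ℝ → ℝ), ContDiffOn ℝ (⊤ : ℕ∞) ψ U → ∀ t ∈ U,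
      iteratedDerivWithin n (fun s => (1 + lam * s) * ψ s) U t
        = (1 + lam * t) * iteratedDerivWithin n ψ U t
            + (n : ℝ) * lam * iteratedDerivWithin (n - 1) ψ U t := by
  have hUd : UniqueDiffOn ℝ U := hU.uniqueDiffOn
  intro n
  induction n with
  | zero => intro ψ hψ t ht; simp
  | succ n IH =>
    intro ψ hψ t ht
    have hψ' : ContDiffOn ℝ (⊤ : ℕ∞) (derivWithin ψ U) U := by
      exact hψ.derivWithin hUd (by exact_mod_cast le_top)
    have h1 : Set.EqOn (derivWithin (fun s => (1 + lam * s) * ψ s) U)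
        (fun s => lam * ψ s + (1 + lam * s) * derivWithin ψ U s) U := by
      intro s hs
      have hd : DifferentiableAt ℝ ψ s :=
        ((hψ.contDiffAt (hU.mem_nhds hs)).differentiableAt (by simp))
      have ha : HasDerivAt (fun s : ℝ => 1 + lam * s) lam s := by
        simpa using ((hasDerivAt_id s).const_mul lam).const_add 1
      have hmul : HasDerivAt (fun s => (1 + lam * s) * ψ s)
          (lam * ψ s + (1 + lam * s) * deriv ψ s) s := by
        exact ha.mul hd.hasDerivAt
      rw [derivWithin_of_isOpen hU hs, hmul.deriv]
      simp only [derivWithin_of_isOpen hU hs]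
    rw [iteratedDerivWithin_succ',
      iteratedDerivWithin_congr h1 ht]
    have hcf : ContDiffOn ℝ (n : ℕ∞) (fun s => lam * ψ s) U :=
      (hψ.of_le (by exact_mod_cast le_top)).const_smul lam
    have hcg : ContDiffOn ℝ (n : ℕ∞) (fun s => (1 + lam * s) * derivWithin ψ U s) U := by
      have : ContDiffOn ℝ (n : ℕ∞) (fun s : ℝ => 1 + lam * s) U :=
        (contDiff_const.add (contDiff_const.mul contDiff_id)).contDiffOn
      exact this.mul (hψ'.of_le (by exact_mod_cast le_top))
    have hsplit : iteratedDerivWithin n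
        (fun s => lam * ψ s + (1 + lam * s) * derivWithin ψ U s) U t
        = iteratedDerivWithin n (fun s => lam * ψ s) U t
          + iteratedDerivWithin n (fun s => (1 + lam * s) * derivWithin ψ U s) U t :=
      iteratedDerivWithin_add ht hUd (hcf t ht) (hcg t ht)
    rw [hsplit, iteratedDerivWithin_const_mul ht hUd lam
        ((hψ.of_le (by exact_mod_cast le_top)) t ht),
      IH (derivWithin ψ U) hψ' t ht]
    rw [← iteratedDerivWithin_succ']
    cases n with
    | zero => simp; ring
    | succ m =>
      have : iteratedDerivWithin (m + 1 - 1) (derivWithin ψ U) U t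
          = iteratedDerivWithin (m + 1) ψ U t := by
        simp only [Nat.add_sub_cancel]
        exact (congrFun iteratedDerivWithin_succ' t).symm
      rw [this]
      push_cast
      ring

theorem T2_poly_recurrence (lam x : ℝ) (hlam : lam ≠ 0) (n k : ℕ) (hk : 1 ≤ k) (hkn : k ≤ n) :
    T2 lam x (n + 1) k
      = (x + (k : ℝ) / 2 - (n : ℝ) * lam) * T2 lam x n k
        + T2 lam (x - 1 / 2) n (k - 1) := by
  obtain ⟨m, rfl⟩ : ∃ m, k = m + 1 := ⟨k - 1, (Nat.succ_pred_eq_of_pos hk).symm⟩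
  obtain ⟨p, rfl⟩ : ∃ p, n = p + 1 := ⟨n - 1, (Nat.succ_pred_eq_of_pos (hk.trans hkn)).symm⟩
  set k := m + 1 with hkdef
  set n := p + 1 with hndef
  set U : Set ℝ := {t : ℝ | 0 < 1 + lam * t} with hUdef
  have hU : IsOpen U := isOpen_lt continuous_const
    (continuous_const.add (continuous_const.mul continuous_id))
  have hUd : UniqueDiffOn ℝ U := hU.uniqueDiffOn
  have h0 : (0 : ℝ) ∈ U := by simp [hUdef]
  set Fc : ℝ → ℕ → ℝ → ℝ := fun c j t =>
    (j.factorial : ℝ)⁻¹ * (1 + lam * t) ^ (c / lam) *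
      ((1 + lam * t) ^ (1 / (2 * lam)) - (1 + lam * t) ^ (-(1 / (2 * lam)))) ^ j with hFcdef
  have hT2 : ∀ (c : ℝ) (N j : ℕ), T2 lam c N j = iteratedDeriv N (Fc c j) 0 := fun _ _ _ => rfl
  -- smoothness of rpow pieces on U
  have hrp : ∀ q : ℝ, ContDiffOn ℝ (⊤ : ℕ∞) (fun t : ℝ => (1 + lam * t) ^ q) U := by
    intro q t ht
    have h1 : ContDiffAt ℝ (⊤ : ℕ∞) (fun t : ℝ => 1 + lam * t) t :=
      (contDiff_const.add (contDiff_const.mul contDiff_id)).contDiffAt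
    exact (h1.rpow_const_of_ne (ne_of_gt ht)).contDiffWithinAt
  have hF : ∀ (c : ℝ) (j : ℕ), ContDiffOn ℝ (⊤ : ℕ∞) (Fc c j) U := by
    intro c j
    exact (contDiffOn_const.mul (hrp _)).mul (((hrp _).sub (hrp _)).pow j)
  -- the key ODE identity on U
  have hkey : Set.EqOn (fun s => (1 + lam * s) * derivWithin (Fc x k) U s)
      (fun s => (x + (k : ℝ) / 2) * Fc x k s + Fc (x - 1 / 2) (k - 1) s) U := by
    intro s hs
    have hu : 0 < 1 + lam * s := hs
    set u := 1 + lam * s with hudef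
    set a : ℝ := 1 / (2 * lam) with hadef
    have ha : HasDerivAt (fun s : ℝ => 1 + lam * s) lam s := by
      simpa using ((hasDerivAt_id s).const_mul lam).const_add 1
    have hA : HasDerivAt (fun s : ℝ => (1 + lam * s) ^ (x / lam))
        (lam * (x / lam) * u ^ (x / lam - 1)) s := ha.rpow_const (Or.inl hu.ne')
    have hQ : HasDerivAt (fun s : ℝ => (1 + lam * s) ^ a)
        (lam * a * u ^ (a - 1)) s := ha.rpow_const (Or.inl hu.ne')
    have hR : HasDerivAt (fun s : ℝ => (1 + lam * s) ^ (-a))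
        (lam * (-a) * u ^ (-a - 1)) s := ha.rpow_const (Or.inl hu.ne')
    have hG : HasDerivAt (fun s : ℝ => (1 + lam * s) ^ a - (1 + lam * s) ^ (-a))
        (lam * a * u ^ (a - 1) - lam * (-a) * u ^ (-a - 1)) s := hQ.sub hR
    have hGk : HasDerivAt (fun s : ℝ =>
        ((1 + lam * s) ^ a - (1 + lam * s) ^ (-a)) ^ k)
        ((k : ℝ) * (u ^ a - u ^ (-a)) ^ (k - 1)
          * (lam * a * u ^ (a - 1) - lam * (-a) * u ^ (-a - 1))) s := hG.pow k
    have hFd : HasDerivAt (Fc x k)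
        ((k.factorial : ℝ)⁻¹ * (lam * (x / lam) * u ^ (x / lam - 1))
            * (u ^ a - u ^ (-a)) ^ k
          + (k.factorial : ℝ)⁻¹ * u ^ (x / lam)
            * ((k : ℝ) * (u ^ a - u ^ (-a)) ^ (k - 1)
              * (lam * a * u ^ (a - 1) - lam * (-a) * u ^ (-a - 1)))) s := by
      have := ((hA.const_mul ((k.factorial : ℝ)⁻¹)).mul hGk)
      exact this
    have hder : derivWithin (Fc x k) U s =
        (k.factorial : ℝ)⁻¹ * (lam * (x / lam) * u ^ (x / lam - 1))
            * (u ^ a - u ^ (-a)) ^ k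
          + (k.factorial : ℝ)⁻¹ * u ^ (x / lam)
            * ((k : ℝ) * (u ^ a - u ^ (-a)) ^ (k - 1)
              * (lam * a * u ^ (a - 1) - lam * (-a) * u ^ (-a - 1))) := by
      rw [derivWithin_of_isOpen hU hs, hFd.deriv]
    show (1 + lam * s) * derivWithin (Fc x k) U s
      = (x + (k : ℝ) / 2) * Fc x k s + Fc (x - 1 / 2) (k - 1) s
    rw [hder]
    have e1 : u ^ (x / lam - 1) * u = u ^ (x / lam) := by
      rw [← Real.rpow_add_one hu.ne', sub_add_cancel]
    have e2 : u ^ (a - 1) * u = u ^ a := by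
      rw [← Real.rpow_add_one hu.ne', sub_add_cancel]
    have e3 : u ^ (-a - 1) * u = u ^ (-a) := by
      rw [← Real.rpow_add_one hu.ne', sub_add_cancel]
    have e4 : u ^ (x / lam) * u ^ (-a) = u ^ ((x - 1 / 2) / lam) := by
      rw [← Real.rpow_add hu]
      congr 1
      rw [hadef]
      ring
    have e5 : (u ^ a - u ^ (-a)) ^ k = (u ^ a - u ^ (-a)) ^ (k - 1) * (u ^ a - u ^ (-a)) := by
      rw [hkdef]
      rw [pow_succ]
      norm_num
    have e6 : lam * (x / lam) = x := by field_simp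
    have e7 : lam * a = 1 / 2 := by rw [hadef]; field_simp
    have e8 : ((k.factorial : ℝ))⁻¹ * (k : ℝ) = ((k - 1).factorial : ℝ)⁻¹ := by
      rw [hkdef]
      simp only [Nat.add_sub_cancel, Nat.factorial_succ]
      push_cast
      rw [mul_inv]
      have h1 : ((m : ℝ) + 1) ≠ 0 := by positivity
      field_simp
    simp only [hFcdef]
    rw [← hudef]
    linear_combination
      ((k.factorial : ℝ)⁻¹ * (u ^ (x / lam - 1)) * u * (u ^ a - u ^ (-a)) ^ k) * e6
      + ((k.factorial : ℝ)⁻¹ * x * (u ^ a - u ^ (-a)) ^ k) * e1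
      + ((k.factorial : ℝ)⁻¹ * (k : ℝ) * (u ^ a - u ^ (-a)) ^ (k - 1) * u ^ (x / lam)
          * (u ^ (a - 1) * u + u ^ (-a - 1) * u)) * e7
      + ((k.factorial : ℝ)⁻¹ * (k : ℝ) * (u ^ a - u ^ (-a)) ^ (k - 1) * u ^ (x / lam) / 2) * e2
      + ((k.factorial : ℝ)⁻¹ * (k : ℝ) * (u ^ a - u ^ (-a)) ^ (k - 1) * u ^ (x / lam) / 2) * e3
      + (-((k : ℝ) / 2) * (k.factorial : ℝ)⁻¹ * u ^ (x / lam)) * e5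
      + ((k.factorial : ℝ)⁻¹ * (k : ℝ) * (u ^ a - u ^ (-a)) ^ (k - 1)) * e4
      + ((u ^ a - u ^ (-a)) ^ (k - 1) * u ^ ((x - 1 / 2) / lam)) * e8
  -- assemble
  set ψ := derivWithin (Fc x k) U with hψdef
  have hψ : ContDiffOn ℝ (⊤ : ℕ∞) ψ U := by
    apply ContDiffOn.derivWithin (hF x k) hUd
    norm_cast
  have step1 : T2 lam x (n + 1) k = iteratedDerivWithin n ψ U 0 := by
    rw [hT2, ← my_idw_open (n + 1) hU h0, iteratedDerivWithin_succ']
  have step2 : iteratedDerivWithin n (fun s => (1 + lam * s) * ψ s) U 0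
      = iteratedDerivWithin n ψ U 0 + (n : ℝ) * lam * iteratedDerivWithin (n - 1) ψ U 0 := by
    have := my_leibniz lam hU n ψ hψ 0 h0
    simpa using this
  have step3 : iteratedDerivWithin (n - 1) ψ U 0 = T2 lam x n k := by
    rw [hndef]
    simp only [Nat.add_sub_cancel]
    rw [hψdef, ← iteratedDerivWithin_succ', my_idw_open _ hU h0, hT2]
  have step4 : iteratedDerivWithin n (fun s => (1 + lam * s) * ψ s) U 0
      = (x + (k : ℝ) / 2) * T2 lam x n k + T2 lam (x - 1 / 2) n (k - 1) := by
    rw [iteratedDerivWithin_congr hkey h0]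
    have hsplit : iteratedDerivWithin n
        (fun s => (x + (k : ℝ) / 2) * Fc x k s + Fc (x - 1 / 2) (k - 1) s) U 0
        = iteratedDerivWithin n (fun s => (x + (k : ℝ) / 2) * Fc x k s) U 0
          + iteratedDerivWithin n (Fc (x - 1 / 2) (k - 1)) U 0 :=
      iteratedDerivWithin_add h0 hUd
        (contDiffOn_const.mul (my_mono (hF x k) n) 0 h0)
        (my_mono (hF (x - 1 / 2) (k - 1)) n 0 h0)
    rw [hsplit, iteratedDerivWithin_const_mul h0 hUd _
        (my_mono (hF x k) n 0 h0),
      my_idw_open n hU h0, my_idw_open n hU h0, ← hT2, ← hT2]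
  have := step2.symm.trans step4
  rw [step3] at this
  rw [step1]
  linarith [this]
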